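/- Let R₁, R_z > 0 and p ∈ [1, ∞). Define, for z ∈ ℝ^d, a compactly supported probability measure μ on ℝ^d and y ∈ ℝ^d, the matrix G(z, μ, y) = (exp(⟨z, y⟩) / γ₂(z, μ)) · ((y − γ(z, μ)) zᵀ + I). Then there exists a constant Λ, depending only on R₁, R_z and p, such that for all z₁, z₂ ∈ B̄(R_z), all y₁, y₂ ∈ B̄(R₁), all probability measures μ₁, μ₂ supported in B̄(R₁), and every coupling π of μ₁ and μ₂, one has ‖G(z₁, μ₁, y₁) − G(z₂, μ₂, y₂)‖_op ≤ Λ · (‖y₁ − y₂‖ + ‖z₁ − z₂‖ + (∫ ‖x − y‖^p dπ(x, y))^{1/p}). -/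

import Mathlib

open MeasureTheory
open scoped RealInnerProductSpace

/-- The normalisation constant `γ₂(z, μ) = ∫ exp⟨z,y⟫ dμ(y)`. -/
noncomputable def gamma2 {d : ℕ} (z : EuclideanSpace ℝ (Fin d))
    (μ : Measure (EuclideanSpace ℝ (Fin d))) : ℝ :=
  ∫ y, Real.exp ⟪z, y⟫ ∂μ

/-- The attention map `γ(z, μ) = (∫ exp⟨z,y⟫ • y dμ(y)) / γ₂(z, μ)`. -/
noncomputable def gammaAttn {d : ℕ} (z : EuclideanSpace ℝ (Fin d))
    (μ : Measure (EuclideanSpace ℝ (Fin d))) : EuclideanSpace ℝ (Fin d) :=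
  (gamma2 z μ)⁻¹ • ∫ y, Real.exp ⟪z, y⟫ • y ∂μ

/-- The Lions derivative `∂_μγ(z,μ)(y) = (exp⟪z,y⟫/γ₂(z,μ)) ((y − γ(z,μ)) zᵀ + I)`,
viewed as a continuous linear map on `ℝ^d`. -/
noncomputable def lionsDerivGamma {d : ℕ} (z : EuclideanSpace ℝ (Fin d))
    (μ : MeasureTheory.Measure (EuclideanSpace ℝ (Fin d))) (y : EuclideanSpace ℝ (Fin d)) :
    EuclideanSpace ℝ (Fin d) →L[ℝ] EuclideanSpace ℝ (Fin d) :=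
  (Real.exp ⟪z, y⟫ / gamma2 z μ) •
    ((innerSL ℝ z).smulRight (y - gammaAttn z μ) +
      ContinuousLinearMap.id ℝ (EuclideanSpace ℝ (Fin d)))

section Helpers

lemma exp_lip' {C a b : ℝ} (ha : a ≤ C) (hb : b ≤ C) :
    |Real.exp a - Real.exp b| ≤ Real.exp C * |a - b| := by
  wlog h : b ≤ a generalizing a b
  · rw [abs_sub_comm, abs_sub_comm a b]; exact this hb ha (le_of_not_ge h)
  have h1 := Real.add_one_le_exp (b - a)
  have h2 : Real.exp a ≤ Real.exp C := Real.exp_le_exp.2 ha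
  have h3 : Real.exp b ≤ Real.exp a := Real.exp_le_exp.2 h
  have h4 : (0:ℝ) < Real.exp a := Real.exp_pos a
  rw [abs_of_nonneg (by linarith), abs_of_nonneg (by linarith)]
  have h5 : Real.exp b ≥ Real.exp a + Real.exp a * (b - a) := by
    have h6 := mul_le_mul_of_nonneg_left h1 h4.le
    rw [Real.exp_sub, mul_div_cancel₀ _ (ne_of_gt h4)] at h6
    nlinarith
  nlinarith

lemma integral_le_rpow_integral' {α : Type*} [MeasurableSpace α] {π : Measure α}
    [IsProbabilityMeasure π] {f : α → ℝ} {p M : ℝ} (hp : 1 ≤ p)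
    (hmeas : AEStronglyMeasurable f π) (h0 : ∀ᵐ a ∂π, 0 ≤ f a) (hM : ∀ᵐ a ∂π, f a ≤ M) :
    ∫ a, f a ∂π ≤ (∫ a, f a ^ p ∂π) ^ (1/p) := by
  have hp0 : (0:ℝ) < p := lt_of_lt_of_le one_pos hp
  have htp : (ENNReal.ofReal p).toReal = p := ENNReal.toReal_ofReal hp0.le
  have hmem : MemLp f (ENNReal.ofReal p) π := by
    refine MemLp.of_bound hmeas (max M 0) ?_
    filter_upwards [h0, hM] with a h0a hMa
    rw [Real.norm_eq_abs, abs_of_nonneg h0a]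
    exact le_max_of_le_left hMa
  have hmem1 : MemLp f 1 π :=
    hmem.mono_exponent (by simpa using ENNReal.one_le_ofReal.2 hp)
  have key : eLpNorm f 1 π ≤ eLpNorm f (ENNReal.ofReal p) π :=
    eLpNorm_le_eLpNorm_of_exponent_le (by simpa using ENNReal.one_le_ofReal.2 hp) hmeas
  rw [hmem1.eLpNorm_eq_integral_rpow_norm one_ne_zero ENNReal.one_ne_top,
    hmem.eLpNorm_eq_integral_rpow_norm (by simp [hp0]) ENNReal.ofReal_ne_top, htp] at key
  simp only [ENNReal.toReal_one, Real.rpow_one, inv_one] at key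
  have hle := (ENNReal.ofReal_le_ofReal_iff (by positivity)).1 key
  calc ∫ a, f a ∂π = ∫ a, ‖f a‖ ∂π := by
        refine integral_congr_ae ?_
        filter_upwards [h0] with a ha
        rw [Real.norm_eq_abs, abs_of_nonneg ha]
    _ ≤ (∫ a, ‖f a‖ ^ p ∂π) ^ p⁻¹ := hle
    _ = (∫ a, f a ^ p ∂π) ^ (1/p) := by
        rw [one_div]
        congr 1
        refine integral_congr_ae ?_
        filter_upwards [h0] with a ha
        rw [Real.norm_eq_abs, abs_of_nonneg ha]

lemma integral_fst' {α β F : Type*} [MeasurableSpace α] [MeasurableSpace β]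
    [NormedAddCommGroup F] [NormedSpace ℝ F]
    {π : Measure (α × β)} {μ : Measure α} (h : π.fst = μ) {f : α → F}
    (hf : AEStronglyMeasurable f μ) : ∫ q, f q.1 ∂π = ∫ y, f y ∂μ := by
  subst h
  exact (integral_map measurable_fst.aemeasurable hf).symm

lemma integral_snd' {α β F : Type*} [MeasurableSpace α] [MeasurableSpace β]
    [NormedAddCommGroup F] [NormedSpace ℝ F]
    {π : Measure (α × β)} {μ : Measure β} (h : π.snd = μ) {f : β → F}
    (hf : AEStronglyMeasurable f μ) : ∫ q, f q.2 ∂π = ∫ y, f y ∂μ := by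
  subst h
  exact (integral_map measurable_snd.aemeasurable hf).symm

lemma ae_fst' {α β : Type*} [MeasurableSpace α] [MeasurableSpace β]
    {π : Measure (α × β)} {μ : Measure α} (h : π.fst = μ) {s : Set α}
    (hs : MeasurableSet s) (hμ : ∀ᵐ y ∂μ, y ∈ s) : ∀ᵐ q ∂π, q.1 ∈ s := by
  subst h
  exact (ae_map_iff measurable_fst.aemeasurable hs).1 hμ

lemma ae_snd' {α β : Type*} [MeasurableSpace α] [MeasurableSpace β]
    {π : Measure (α × β)} {μ : Measure β} (h : π.snd = μ) {s : Set β}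
    (hs : MeasurableSet s) (hμ : ∀ᵐ y ∂μ, y ∈ s) : ∀ᵐ q ∂π, q.2 ∈ s := by
  subst h
  exact (ae_map_iff measurable_snd.aemeasurable hs).1 hμ

lemma integrable_of_cont_bdd {α F : Type*} [MeasurableSpace α] [TopologicalSpace α]
    [OpensMeasurableSpace α] [NormedAddCommGroup F] [SecondCountableTopologyEither α F]
    {π : Measure α} [IsFiniteMeasure π]
    {f : α → F} (hf : Continuous f) {C : ℝ} (h : ∀ᵐ x ∂π, ‖f x‖ ≤ C) : Integrable f π :=
  ⟨hf.aestronglyMeasurable, HasFiniteIntegral.of_bounded h⟩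

variable {d : ℕ}

lemma ae_mem_ball {R : ℝ} (μ : Measure (EuclideanSpace ℝ (Fin d))) [IsProbabilityMeasure μ]
    (h : μ (Metric.closedBall 0 R) = 1) :
    ∀ᵐ y ∂μ, y ∈ Metric.closedBall (0 : EuclideanSpace ℝ (Fin d)) R := by
  have hc : μ (Metric.closedBall (0 : EuclideanSpace ℝ (Fin d)) R)ᶜ = 0 := by
    rw [measure_compl measurableSet_closedBall (measure_ne_top μ _), h, measure_univ, tsub_self]
  rw [ae_iff]
  exact measure_mono_null (fun y hy => hy) hc

lemma ae_ball' {R : ℝ} (μ : Measure (EuclideanSpace ℝ (Fin d))) [IsProbabilityMeasure μ]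
    (h : μ (Metric.closedBall 0 R) = 1) : ∀ᵐ y ∂μ, ‖y‖ ≤ R := by
  filter_upwards [ae_mem_ball μ h] with y hy
  exact mem_closedBall_zero_iff.1 hy

lemma inner_le_bound {R Rz : ℝ} {z y : EuclideanSpace ℝ (Fin d)}
    (hz : ‖z‖ ≤ Rz) (hy : ‖y‖ ≤ R) : |⟪z, y⟫| ≤ Rz * R :=
  (abs_real_inner_le_norm z y).trans
    (mul_le_mul hz hy (norm_nonneg _) ((norm_nonneg z).trans hz))

lemma cont_exp_inner (z : EuclideanSpace ℝ (Fin d)) :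
    Continuous fun y : EuclideanSpace ℝ (Fin d) => Real.exp ⟪z, y⟫ :=
  Real.continuous_exp.comp (continuous_const.inner continuous_id)

lemma integrable_exp_inner {R Rz : ℝ} {z : EuclideanSpace ℝ (Fin d)}
    (μ : Measure (EuclideanSpace ℝ (Fin d))) [IsProbabilityMeasure μ]
    (hz : ‖z‖ ≤ Rz) (hae : ∀ᵐ y ∂μ, ‖y‖ ≤ R) :
    Integrable (fun y : EuclideanSpace ℝ (Fin d) => Real.exp ⟪z, y⟫) μ := by
  refine ⟨(cont_exp_inner z).aestronglyMeasurable, ?_⟩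
  refine HasFiniteIntegral.of_bounded (C := Real.exp (Rz * R)) ?_
  filter_upwards [hae] with y hy
  rw [Real.norm_eq_abs, abs_of_nonneg (Real.exp_pos _).le]
  exact Real.exp_le_exp.2 ((le_abs_self _).trans (inner_le_bound hz hy))

lemma integrable_exp_smul {R Rz : ℝ} {z : EuclideanSpace ℝ (Fin d)}
    (μ : Measure (EuclideanSpace ℝ (Fin d))) [IsProbabilityMeasure μ]
    (hz : ‖z‖ ≤ Rz) (hae : ∀ᵐ y ∂μ, ‖y‖ ≤ R) :
    Integrable (fun y : EuclideanSpace ℝ (Fin d) => Real.exp ⟪z, y⟫ • y) μ := by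
  refine ⟨((cont_exp_inner z).smul continuous_id).aestronglyMeasurable, ?_⟩
  refine HasFiniteIntegral.of_bounded (C := Real.exp (Rz * R) * R) ?_
  filter_upwards [hae] with y hy
  rw [norm_smul, Real.norm_eq_abs, abs_of_nonneg (Real.exp_pos _).le]
  exact mul_le_mul (Real.exp_le_exp.2 ((le_abs_self _).trans (inner_le_bound hz hy))) hy
    (norm_nonneg _) (Real.exp_pos _).le

lemma gamma2_le' {R Rz : ℝ} {z : EuclideanSpace ℝ (Fin d)}
    (μ : Measure (EuclideanSpace ℝ (Fin d))) [IsProbabilityMeasure μ]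
    (hz : ‖z‖ ≤ Rz) (hae : ∀ᵐ y ∂μ, ‖y‖ ≤ R) : gamma2 z μ ≤ Real.exp (Rz * R) := by
  have := integral_mono_ae (integrable_exp_inner μ hz hae) (integrable_const (Real.exp (Rz * R)))
    (by filter_upwards [hae] with y hy
        exact Real.exp_le_exp.2 ((le_abs_self _).trans (inner_le_bound hz hy)))
  simpa [gamma2] using this

lemma gamma2_ge' {R Rz : ℝ} {z : EuclideanSpace ℝ (Fin d)}
    (μ : Measure (EuclideanSpace ℝ (Fin d))) [IsProbabilityMeasure μ]
    (hz : ‖z‖ ≤ Rz) (hae : ∀ᵐ y ∂μ, ‖y‖ ≤ R) : Real.exp (-(Rz * R)) ≤ gamma2 z μ := by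
  have := integral_mono_ae (integrable_const (Real.exp (-(Rz * R))))
    (integrable_exp_inner μ hz hae)
    (by filter_upwards [hae] with y hy
        exact Real.exp_le_exp.2 (neg_le_of_abs_le (inner_le_bound hz hy)))
  simpa [gamma2] using this

lemma gamma2_pos' {R Rz : ℝ} {z : EuclideanSpace ℝ (Fin d)}
    (μ : Measure (EuclideanSpace ℝ (Fin d))) [IsProbabilityMeasure μ]
    (hz : ‖z‖ ≤ Rz) (hae : ∀ᵐ y ∂μ, ‖y‖ ≤ R) : 0 < gamma2 z μ :=
  lt_of_lt_of_le (Real.exp_pos _) (gamma2_ge' μ hz hae)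

lemma gamma2_inv_le' {R Rz : ℝ} {z : EuclideanSpace ℝ (Fin d)}
    (μ : Measure (EuclideanSpace ℝ (Fin d))) [IsProbabilityMeasure μ]
    (hz : ‖z‖ ≤ Rz) (hae : ∀ᵐ y ∂μ, ‖y‖ ≤ R) : (gamma2 z μ)⁻¹ ≤ Real.exp (Rz * R) := by
  have h := inv_anti₀ (Real.exp_pos (-(Rz * R))) (gamma2_ge' μ hz hae)
  rwa [← Real.exp_neg, neg_neg] at h

lemma norm_intv_le' {R Rz : ℝ} {z : EuclideanSpace ℝ (Fin d)}
    (μ : Measure (EuclideanSpace ℝ (Fin d))) [IsProbabilityMeasure μ]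
    (hz : ‖z‖ ≤ Rz) (hae : ∀ᵐ y ∂μ, ‖y‖ ≤ R) :
    ‖∫ y, Real.exp ⟪z, y⟫ • y ∂μ‖ ≤ Real.exp (Rz * R) * R := by
  have := norm_integral_le_of_norm_le (μ := μ)
    (f := fun y : EuclideanSpace ℝ (Fin d) => Real.exp ⟪z, y⟫ • y)
    (integrable_const (Real.exp (Rz * R) * R)) ?_
  · simpa using this
  · filter_upwards [hae] with y hy
    rw [norm_smul, Real.norm_eq_abs, abs_of_nonneg (Real.exp_pos _).le]
    exact mul_le_mul (Real.exp_le_exp.2 ((le_abs_self _).trans (inner_le_bound hz hy))) hy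
      (norm_nonneg _) (Real.exp_pos _).le

lemma norm_gammaAttn_le' {R Rz : ℝ} {z : EuclideanSpace ℝ (Fin d)}
    (μ : Measure (EuclideanSpace ℝ (Fin d))) [IsProbabilityMeasure μ]
    (hz : ‖z‖ ≤ Rz) (hae : ∀ᵐ y ∂μ, ‖y‖ ≤ R) :
    ‖gammaAttn z μ‖ ≤ Real.exp (Rz * R) * (Real.exp (Rz * R) * R) := by
  rw [gammaAttn, norm_smul, Real.norm_eq_abs,
    abs_of_nonneg (inv_nonneg.2 (gamma2_pos' μ hz hae).le)]
  exact mul_le_mul (gamma2_inv_le' μ hz hae) (norm_intv_le' μ hz hae)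
    (norm_nonneg _) (Real.exp_pos _).le

end Helpers

set_option maxHeartbeats 1600000 in
set_option synthInstance.maxHeartbeats 400000 in
/-- Joint local Lipschitz continuity of the Lions derivative `∂_μγ`: there is a constant `Λ`,
depending only on `R₁, R_z, p`, bounding `‖∂_μγ(z₁,μ₁)(y₁) − ∂_μγ(z₂,μ₂)(y₂)‖_op` by
`Λ (‖y₁ − y₂‖ + ‖z₁ − z₂‖ + (∫ ‖x − y‖^p dπ)^{1/p})` for all admissible arguments and
couplings `π` of `μ₁, μ₂`. -/
theorem stmt_10 {d : ℕ} (R₁ Rz p : ℝ) (hR₁ : 0 < R₁) (hRz : 0 < Rz) (hp : 1 ≤ p) :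
    ∃ Λ : ℝ, ∀ (z₁ z₂ : EuclideanSpace ℝ (Fin d)),
      z₁ ∈ Metric.closedBall (0 : EuclideanSpace ℝ (Fin d)) Rz →
      z₂ ∈ Metric.closedBall (0 : EuclideanSpace ℝ (Fin d)) Rz →
      ∀ (y₁ y₂ : EuclideanSpace ℝ (Fin d)),
      y₁ ∈ Metric.closedBall (0 : EuclideanSpace ℝ (Fin d)) R₁ →
      y₂ ∈ Metric.closedBall (0 : EuclideanSpace ℝ (Fin d)) R₁ →
      ∀ (μ₁ μ₂ : Measure (EuclideanSpace ℝ (Fin d))),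
      IsProbabilityMeasure μ₁ → IsProbabilityMeasure μ₂ →
      μ₁ (Metric.closedBall 0 R₁) = 1 → μ₂ (Metric.closedBall 0 R₁) = 1 →
      ∀ (π : Measure (EuclideanSpace ℝ (Fin d) × EuclideanSpace ℝ (Fin d))),
      IsProbabilityMeasure π → π.fst = μ₁ → π.snd = μ₂ →
      ‖lionsDerivGamma z₁ μ₁ y₁ - lionsDerivGamma z₂ μ₂ y₂‖ ≤
        Λ * (‖y₁ - y₂‖ + ‖z₁ - z₂‖ + (∫ q, ‖q.1 - q.2‖ ^ p ∂π) ^ (1 / p)) := by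
  set e := Real.exp (Rz * R₁) with he
  set Kg := e * (R₁ + Rz) with hKg
  set Kv := e * (R₁ * R₁ + R₁ * Rz + 1) with hKv
  set Kγ := e * Kv + e * e * Kg * (e * R₁) with hKγ
  set Kw := 1 + Kγ with hKw
  set Ka := (R₁ + e * (e * R₁)) + Rz * Kw with hKa
  set Kc := e * Kg + e * (e * e * Kg) with hKc
  set Kb := Rz * (R₁ + e * (e * R₁)) + 1 with hKb
  refine ⟨Kc * Kb + (e * e) * Ka, ?_⟩
  intro z₁ z₂ hz₁ hz₂ y₁ y₂ hy₁ hy₂ μ₁ μ₂ hμ₁ hμ₂ hs₁ hs₂ π hπ hfst hsnd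
  clear_value Kg Kv Kγ Kw Ka Kc Kb
  have hKg0 : 0 ≤ Kg := by rw [hKg]; positivity
  have hKv0 : 0 ≤ Kv := by rw [hKv]; positivity
  have hKγ0 : 0 ≤ Kγ := by rw [hKγ]; positivity
  have hKw0 : 0 ≤ Kw := by rw [hKw]; positivity
  have hKa0 : 0 ≤ Ka := by rw [hKa]; positivity
  have hKc0 : 0 ≤ Kc := by rw [hKc]; positivity
  have hKb0 : 0 ≤ Kb := by rw [hKb]; positivity
  haveI := hμ₁; haveI := hμ₂; haveI := hπ
  have he1 : (1:ℝ) ≤ e := Real.one_le_exp (by positivity)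
  have he0 : (0:ℝ) < e := Real.exp_pos _
  replace hz₁ : ‖z₁‖ ≤ Rz := mem_closedBall_zero_iff.1 hz₁
  replace hz₂ : ‖z₂‖ ≤ Rz := mem_closedBall_zero_iff.1 hz₂
  replace hy₁ : ‖y₁‖ ≤ R₁ := mem_closedBall_zero_iff.1 hy₁
  replace hy₂ : ‖y₂‖ ≤ R₁ := mem_closedBall_zero_iff.1 hy₂
  have hae₁ : ∀ᵐ y ∂μ₁, ‖y‖ ≤ R₁ := ae_ball' μ₁ hs₁
  have hae₂ : ∀ᵐ y ∂μ₂, ‖y‖ ≤ R₁ := ae_ball' μ₂ hs₂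
  have haq₁ : ∀ᵐ q ∂π, ‖q.1‖ ≤ R₁ := by
    filter_upwards [ae_fst' hfst measurableSet_closedBall (ae_mem_ball μ₁ hs₁)] with q hq
    exact mem_closedBall_zero_iff.1 hq
  have haq₂ : ∀ᵐ q ∂π, ‖q.2‖ ≤ R₁ := by
    filter_upwards [ae_snd' hsnd measurableSet_closedBall (ae_mem_ball μ₂ hs₂)] with q hq
    exact mem_closedBall_zero_iff.1 hq
  set T := (∫ q, ‖q.1 - q.2‖ ^ p ∂π) ^ (1 / p) with hT
  set S := ‖y₁ - y₂‖ + ‖z₁ - z₂‖ + T with hS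
  set W := ∫ q, ‖q.1 - q.2‖ ∂π with hW
  have hT0 : 0 ≤ T :=
    Real.rpow_nonneg (integral_nonneg fun q => Real.rpow_nonneg (norm_nonneg _) p) _
  have hWT : W ≤ T := by
    refine integral_le_rpow_integral' (M := 2 * R₁) hp
      ((continuous_fst.sub continuous_snd).norm.aestronglyMeasurable)
      (Filter.Eventually.of_forall fun q => norm_nonneg _) ?_
    filter_upwards [haq₁, haq₂] with q h1 h2
    calc ‖q.1 - q.2‖ ≤ ‖q.1‖ + ‖q.2‖ := norm_sub_le _ _
      _ ≤ 2 * R₁ := by linarith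
  have hW0 : 0 ≤ W := integral_nonneg fun q => norm_nonneg _
  have hS0 : 0 ≤ S := by
    have := norm_nonneg (y₁ - y₂); have := norm_nonneg (z₁ - z₂); linarith
  have hySle : ‖y₁ - y₂‖ ≤ S := by
    have := norm_nonneg (z₁ - z₂); linarith
  have hzSle : ‖z₁ - z₂‖ ≤ S := by
    have := norm_nonneg (y₁ - y₂); linarith
  have hWSle : W ≤ S := by
    have := norm_nonneg (y₁ - y₂); have := norm_nonneg (z₁ - z₂); linarith
  clear_value T S
  -- integrability on π
  have hi1 : Integrable (fun q : EuclideanSpace ℝ (Fin d) × EuclideanSpace ℝ (Fin d) =>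
      Real.exp ⟪z₁, q.1⟫) π := by
    refine integrable_of_cont_bdd ((cont_exp_inner z₁).comp continuous_fst) (C := e) ?_
    filter_upwards [haq₁] with q hq
    rw [Real.norm_eq_abs, abs_of_nonneg (Real.exp_pos _).le]
    exact Real.exp_le_exp.2 ((le_abs_self _).trans (inner_le_bound hz₁ hq))
  have hi2 : Integrable (fun q : EuclideanSpace ℝ (Fin d) × EuclideanSpace ℝ (Fin d) =>
      Real.exp ⟪z₂, q.2⟫) π := by
    refine integrable_of_cont_bdd ((cont_exp_inner z₂).comp continuous_snd) (C := e) ?_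
    filter_upwards [haq₂] with q hq
    rw [Real.norm_eq_abs, abs_of_nonneg (Real.exp_pos _).le]
    exact Real.exp_le_exp.2 ((le_abs_self _).trans (inner_le_bound hz₂ hq))
  have hiW : Integrable (fun q : EuclideanSpace ℝ (Fin d) × EuclideanSpace ℝ (Fin d) =>
      ‖q.1 - q.2‖) π := by
    refine integrable_of_cont_bdd ((continuous_fst.sub continuous_snd).norm) (C := 2 * R₁) ?_
    filter_upwards [haq₁, haq₂] with q h1 h2
    rw [Real.norm_eq_abs, abs_of_nonneg (norm_nonneg _)]
    calc ‖q.1 - q.2‖ ≤ ‖q.1‖ + ‖q.2‖ := norm_sub_le _ _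
      _ ≤ 2 * R₁ := by linarith
  have hiv1 : Integrable (fun q : EuclideanSpace ℝ (Fin d) × EuclideanSpace ℝ (Fin d) =>
      Real.exp ⟪z₁, q.1⟫ • q.1) π := by
    refine integrable_of_cont_bdd
      (((cont_exp_inner z₁).comp continuous_fst).smul continuous_fst) (C := e * R₁) ?_
    filter_upwards [haq₁] with q hq
    rw [norm_smul, Real.norm_eq_abs, abs_of_nonneg (Real.exp_pos _).le]
    exact mul_le_mul (Real.exp_le_exp.2 ((le_abs_self _).trans (inner_le_bound hz₁ hq))) hq
      (norm_nonneg _) he0.le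
  have hiv2 : Integrable (fun q : EuclideanSpace ℝ (Fin d) × EuclideanSpace ℝ (Fin d) =>
      Real.exp ⟪z₂, q.2⟫ • q.2) π := by
    refine integrable_of_cont_bdd
      (((cont_exp_inner z₂).comp continuous_snd).smul continuous_snd) (C := e * R₁) ?_
    filter_upwards [haq₂] with q hq
    rw [norm_smul, Real.norm_eq_abs, abs_of_nonneg (Real.exp_pos _).le]
    exact mul_le_mul (Real.exp_le_exp.2 ((le_abs_self _).trans (inner_le_bound hz₂ hq))) hq
      (norm_nonneg _) he0.le
  -- abbreviations
  set g₁ := gamma2 z₁ μ₁ with hg₁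
  set g₂ := gamma2 z₂ μ₂ with hg₂
  set v₁ := ∫ y, Real.exp ⟪z₁, y⟫ • y ∂μ₁ with hv₁
  set v₂ := ∫ y, Real.exp ⟪z₂, y⟫ • y ∂μ₂ with hv₂
  have hg₁pos : 0 < g₁ := gamma2_pos' μ₁ hz₁ hae₁
  have hg₂pos : 0 < g₂ := gamma2_pos' μ₂ hz₂ hae₂
  have hg₁inv : g₁⁻¹ ≤ e := gamma2_inv_le' μ₁ hz₁ hae₁
  have hg2inv : g₂⁻¹ ≤ e := gamma2_inv_le' μ₂ hz₂ hae₂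
  have hv₁n : ‖v₁‖ ≤ e * R₁ := norm_intv_le' μ₁ hz₁ hae₁
  have hv₂n : ‖v₂‖ ≤ e * R₁ := norm_intv_le' μ₂ hz₂ hae₂
  -- difference of gamma2
  have hgrep₁ : g₁ = ∫ q, Real.exp ⟪z₁, q.1⟫ ∂π :=
    (integral_fst' hfst (cont_exp_inner z₁).aestronglyMeasurable).symm
  have hgrep₂ : g₂ = ∫ q, Real.exp ⟪z₂, q.2⟫ ∂π :=
    (integral_snd' hsnd (cont_exp_inner z₂).aestronglyMeasurable).symm
  have hinnersplit : ∀ q : EuclideanSpace ℝ (Fin d) × EuclideanSpace ℝ (Fin d),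
      ‖q.1‖ ≤ R₁ → ‖q.2‖ ≤ R₁ →
      |⟪z₁, q.1⟫ - ⟪z₂, q.2⟫| ≤ ‖z₁ - z₂‖ * R₁ + Rz * ‖q.1 - q.2‖ := by
    intro q h1 h2
    have hsplit : ⟪z₁, q.1⟫ - ⟪z₂, q.2⟫ = ⟪z₁ - z₂, q.1⟫ + ⟪z₂, q.1 - q.2⟫ := by
      rw [inner_sub_left, inner_sub_right]; ring
    rw [hsplit]
    calc |⟪z₁ - z₂, q.1⟫ + ⟪z₂, q.1 - q.2⟫| ≤ |⟪z₁ - z₂, q.1⟫| + |⟪z₂, q.1 - q.2⟫| :=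
          abs_add_le _ _
      _ ≤ ‖z₁ - z₂‖ * R₁ + Rz * ‖q.1 - q.2‖ :=
          add_le_add (inner_le_bound le_rfl h1) (inner_le_bound hz₂ le_rfl)
  have hgdiff : |g₁ - g₂| ≤ Kg * S := by
    have hbint : Integrable (fun q : EuclideanSpace ℝ (Fin d) × EuclideanSpace ℝ (Fin d) =>
        e * (R₁ * ‖z₁ - z₂‖) + e * Rz * ‖q.1 - q.2‖) π :=
      (integrable_const _).add (hiW.const_mul _)
    have key : |g₁ - g₂| ≤ ∫ q, (e * (R₁ * ‖z₁ - z₂‖) + e * Rz * ‖q.1 - q.2‖) ∂π := by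
      rw [hgrep₁, hgrep₂, ← integral_sub hi1 hi2, ← Real.norm_eq_abs]
      refine (norm_integral_le_of_norm_le hbint ?_)
      filter_upwards [haq₁, haq₂] with q h1 h2
      rw [Real.norm_eq_abs]
      have h3 : ⟪z₁, q.1⟫ ≤ Rz * R₁ := (le_abs_self _).trans (inner_le_bound hz₁ h1)
      have h4 : ⟪z₂, q.2⟫ ≤ Rz * R₁ := (le_abs_self _).trans (inner_le_bound hz₂ h2)
      calc |Real.exp ⟪z₁, q.1⟫ - Real.exp ⟪z₂, q.2⟫|
          ≤ e * |⟪z₁, q.1⟫ - ⟪z₂, q.2⟫| := exp_lip' h3 h4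
        _ ≤ e * (‖z₁ - z₂‖ * R₁ + Rz * ‖q.1 - q.2‖) :=
            mul_le_mul_of_nonneg_left (hinnersplit q h1 h2) he0.le
        _ = e * (R₁ * ‖z₁ - z₂‖) + e * Rz * ‖q.1 - q.2‖ := by ring
    have hint : ∫ q, (e * (R₁ * ‖z₁ - z₂‖) + e * Rz * ‖q.1 - q.2‖) ∂π
        = e * (R₁ * ‖z₁ - z₂‖) + e * Rz * W := by
      rw [integral_add (integrable_const _) (hiW.const_mul _), integral_const, probReal_univ,
        one_smul, integral_const_mul, hW]
    rw [hint] at key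
    refine key.trans ?_
    rw [hKg]
    have a1 := mul_le_mul_of_nonneg_left hzSle (mul_nonneg he0.le hR₁.le)
    have a2 := mul_le_mul_of_nonneg_left hWSle (mul_nonneg he0.le hRz.le)
    linarith [a1, a2]
  -- difference of the vector integrals
  have hvrep₁ : v₁ = ∫ q, Real.exp ⟪z₁, q.1⟫ • q.1 ∂π :=
    (integral_fst' hfst ((cont_exp_inner z₁).smul continuous_id).aestronglyMeasurable).symm
  have hvrep₂ : v₂ = ∫ q, Real.exp ⟪z₂, q.2⟫ • q.2 ∂π :=
    (integral_snd' hsnd ((cont_exp_inner z₂).smul continuous_id).aestronglyMeasurable).symm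
  have hvdiff : ‖v₁ - v₂‖ ≤ Kv * S := by
    have hbint : Integrable (fun q : EuclideanSpace ℝ (Fin d) × EuclideanSpace ℝ (Fin d) =>
        e * R₁ * R₁ * ‖z₁ - z₂‖ + (e * Rz * R₁ + e) * ‖q.1 - q.2‖) π :=
      (integrable_const _).add (hiW.const_mul _)
    have key : ‖v₁ - v₂‖ ≤ ∫ q,
        (e * R₁ * R₁ * ‖z₁ - z₂‖ + (e * Rz * R₁ + e) * ‖q.1 - q.2‖) ∂π := by
      rw [hvrep₁, hvrep₂, ← integral_sub hiv1 hiv2]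
      refine (norm_integral_le_of_norm_le hbint ?_)
      filter_upwards [haq₁, haq₂] with q h1 h2
      have hid : Real.exp ⟪z₁, q.1⟫ • q.1 - Real.exp ⟪z₂, q.2⟫ • q.2
          = (Real.exp ⟪z₁, q.1⟫ - Real.exp ⟪z₂, q.2⟫) • q.1
            + Real.exp ⟪z₂, q.2⟫ • (q.1 - q.2) := by
        rw [sub_smul, smul_sub]; abel
      have h3 : ⟪z₁, q.1⟫ ≤ Rz * R₁ := (le_abs_self _).trans (inner_le_bound hz₁ h1)
      have h4 : ⟪z₂, q.2⟫ ≤ Rz * R₁ := (le_abs_self _).trans (inner_le_bound hz₂ h2)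
      have hexp2 : Real.exp ⟪z₂, q.2⟫ ≤ e := Real.exp_le_exp.2 h4
      calc ‖Real.exp ⟪z₁, q.1⟫ • q.1 - Real.exp ⟪z₂, q.2⟫ • q.2‖
          ≤ ‖(Real.exp ⟪z₁, q.1⟫ - Real.exp ⟪z₂, q.2⟫) • q.1‖
            + ‖Real.exp ⟪z₂, q.2⟫ • (q.1 - q.2)‖ := by rw [hid]; exact norm_add_le _ _
        _ = |Real.exp ⟪z₁, q.1⟫ - Real.exp ⟪z₂, q.2⟫| * ‖q.1‖
            + |Real.exp ⟪z₂, q.2⟫| * ‖q.1 - q.2‖ := by rw [norm_smul, norm_smul]; rfl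
        _ ≤ (e * (‖z₁ - z₂‖ * R₁ + Rz * ‖q.1 - q.2‖)) * R₁ + e * ‖q.1 - q.2‖ := by
            refine add_le_add ?_ ?_
            · refine mul_le_mul ?_ h1 (norm_nonneg _) (by positivity)
              exact (exp_lip' h3 h4).trans
                (mul_le_mul_of_nonneg_left (hinnersplit q h1 h2) he0.le)
            · refine mul_le_mul ?_ le_rfl (norm_nonneg _) he0.le
              rw [abs_of_nonneg (Real.exp_pos _).le]; exact hexp2
        _ ≤ e * R₁ * R₁ * ‖z₁ - z₂‖ + (e * Rz * R₁ + e) * ‖q.1 - q.2‖ := le_of_eq (by ring)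
    have hint : ∫ q, (e * R₁ * R₁ * ‖z₁ - z₂‖ + (e * Rz * R₁ + e) * ‖q.1 - q.2‖) ∂π
        = e * R₁ * R₁ * ‖z₁ - z₂‖ + (e * Rz * R₁ + e) * W := by
      rw [integral_add (integrable_const _) (hiW.const_mul _), integral_const, probReal_univ,
        one_smul, integral_const_mul, hW]
    rw [hint] at key
    refine key.trans ?_
    rw [hKv]
    have a1 := mul_le_mul_of_nonneg_left hzSle (by positivity : (0:ℝ) ≤ e * R₁ * R₁)
    have a2 := mul_le_mul_of_nonneg_left hWSle (by positivity : (0:ℝ) ≤ e * Rz * R₁ + e)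
    linarith [a1, a2]
  -- difference of inverses of gamma2
  have hinvdiff : |g₁⁻¹ - g₂⁻¹| ≤ e * e * (Kg * S) := by
    rw [inv_sub_inv hg₁pos.ne' hg₂pos.ne', abs_div, abs_of_pos (mul_pos hg₁pos hg₂pos),
      div_eq_mul_inv]
    have h1 : (g₁ * g₂)⁻¹ ≤ e * e := by
      rw [mul_inv]
      exact mul_le_mul hg₁inv hg2inv (inv_nonneg.2 hg₂pos.le) he0.le
    have h2 : |g₂ - g₁| ≤ Kg * S := by rw [abs_sub_comm]; exact hgdiff
    calc |g₂ - g₁| * (g₁ * g₂)⁻¹ ≤ (Kg * S) * (e * e) :=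
          mul_le_mul h2 h1 (inv_nonneg.2 (mul_pos hg₁pos hg₂pos).le)
            (mul_nonneg hKg0 hS0)
      _ = e * e * (Kg * S) := by ring
  -- difference of gammaAttn
  have hγdiff : ‖gammaAttn z₁ μ₁ - gammaAttn z₂ μ₂‖ ≤ Kγ * S := by
    have hid : gammaAttn z₁ μ₁ - gammaAttn z₂ μ₂
        = g₁⁻¹ • (v₁ - v₂) + (g₁⁻¹ - g₂⁻¹) • v₂ := by
      rw [gammaAttn, gammaAttn, ← hg₁, ← hg₂, ← hv₁, ← hv₂]
      module
    rw [hid]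
    calc ‖g₁⁻¹ • (v₁ - v₂) + (g₁⁻¹ - g₂⁻¹) • v₂‖
        ≤ ‖g₁⁻¹ • (v₁ - v₂)‖ + ‖(g₁⁻¹ - g₂⁻¹) • v₂‖ := norm_add_le _ _
      _ = |g₁⁻¹| * ‖v₁ - v₂‖ + |g₁⁻¹ - g₂⁻¹| * ‖v₂‖ := by rw [norm_smul, norm_smul]; rfl
      _ ≤ e * (Kv * S) + (e * e * (Kg * S)) * (e * R₁) := by
          refine add_le_add ?_ ?_
          · refine mul_le_mul ?_ hvdiff (norm_nonneg _) he0.le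
            rw [abs_of_nonneg (inv_nonneg.2 hg₁pos.le)]; exact hg₁inv
          · exact mul_le_mul hinvdiff hv₂n (norm_nonneg _)
              (mul_nonneg (mul_nonneg he0.le he0.le) (mul_nonneg hKg0 hS0))
      _ = Kγ * S := by rw [hKγ]; ring
  -- the operator-level quantities
  set c₁ := Real.exp ⟪z₁, y₁⟫ / g₁ with hc₁
  set c₂ := Real.exp ⟪z₂, y₂⟫ / g₂ with hc₂
  set w₁ := y₁ - gammaAttn z₁ μ₁ with hw₁
  set w₂ := y₂ - gammaAttn z₂ μ₂ with hw₂
  set A₁ := (innerSL ℝ z₁).smulRight w₁ with hA₁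
  set A₂ := (innerSL ℝ z₂).smulRight w₂ with hA₂
  have hγ₁n : ‖gammaAttn z₁ μ₁‖ ≤ e * (e * R₁) := norm_gammaAttn_le' μ₁ hz₁ hae₁
  have hγ₂n : ‖gammaAttn z₂ μ₂‖ ≤ e * (e * R₁) := norm_gammaAttn_le' μ₂ hz₂ hae₂
  have hw₁n : ‖w₁‖ ≤ R₁ + e * (e * R₁) := by
    rw [hw₁]
    exact (norm_sub_le _ _).trans (add_le_add hy₁ hγ₁n)
  have hwdiff : ‖w₁ - w₂‖ ≤ Kw * S := by
    have hid : w₁ - w₂ = (y₁ - y₂) - (gammaAttn z₁ μ₁ - gammaAttn z₂ μ₂) := by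
      rw [hw₁, hw₂]; abel
    rw [hid]
    calc ‖(y₁ - y₂) - (gammaAttn z₁ μ₁ - gammaAttn z₂ μ₂)‖
        ≤ ‖y₁ - y₂‖ + ‖gammaAttn z₁ μ₁ - gammaAttn z₂ μ₂‖ := norm_sub_le _ _
      _ ≤ S + Kγ * S := add_le_add hySle hγdiff
      _ = Kw * S := by rw [hKw]; ring
  have hAdiff : ‖A₁ - A₂‖ ≤ Ka * S := by
    have hid : A₁ - A₂ = ((innerSL ℝ) (z₁ - z₂)).smulRight w₁
        + ((innerSL ℝ) z₂).smulRight (w₁ - w₂) := by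
      rw [map_sub]
      refine ContinuousLinearMap.ext fun x => ?_
      simp only [ContinuousLinearMap.sub_apply, ContinuousLinearMap.add_apply,
        ContinuousLinearMap.smulRight_apply, hA₁, hA₂, innerSL_apply_apply, inner_sub_left]
      module
    rw [hid]
    calc ‖((innerSL ℝ) (z₁ - z₂)).smulRight w₁ + ((innerSL ℝ) z₂).smulRight (w₁ - w₂)‖
        ≤ ‖((innerSL ℝ) (z₁ - z₂)).smulRight w₁‖ + ‖((innerSL ℝ) z₂).smulRight (w₁ - w₂)‖ :=
          norm_add_le _ _
      _ = ‖z₁ - z₂‖ * ‖w₁‖ + ‖z₂‖ * ‖w₁ - w₂‖ := by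
          rw [ContinuousLinearMap.norm_smulRight_apply, ContinuousLinearMap.norm_smulRight_apply,
            innerSL_apply_norm, innerSL_apply_norm]
      _ ≤ S * (R₁ + e * (e * R₁)) + Rz * (Kw * S) := by
          refine add_le_add ?_ ?_
          · exact mul_le_mul hzSle hw₁n (norm_nonneg _) hS0
          · exact mul_le_mul hz₂ hwdiff (norm_nonneg _) hRz.le
      _ = Ka * S := by rw [hKa]; ring
  have hEdiff : |Real.exp ⟪z₁, y₁⟫ - Real.exp ⟪z₂, y₂⟫| ≤ Kg * S := by
    have h3 : ⟪z₁, y₁⟫ ≤ Rz * R₁ := (le_abs_self _).trans (inner_le_bound hz₁ hy₁)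
    have h4 : ⟪z₂, y₂⟫ ≤ Rz * R₁ := (le_abs_self _).trans (inner_le_bound hz₂ hy₂)
    have hsplit : ⟪z₁, y₁⟫ - ⟪z₂, y₂⟫ = ⟪z₁ - z₂, y₁⟫ + ⟪z₂, y₁ - y₂⟫ := by
      rw [inner_sub_left, inner_sub_right]; ring
    calc |Real.exp ⟪z₁, y₁⟫ - Real.exp ⟪z₂, y₂⟫|
        ≤ e * |⟪z₁, y₁⟫ - ⟪z₂, y₂⟫| := exp_lip' h3 h4
      _ ≤ e * (‖z₁ - z₂‖ * R₁ + Rz * ‖y₁ - y₂‖) := by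
          refine mul_le_mul_of_nonneg_left ?_ he0.le
          rw [hsplit]
          exact (abs_add_le _ _).trans
            (add_le_add (inner_le_bound le_rfl hy₁) (inner_le_bound hz₂ le_rfl))
      _ ≤ Kg * S := by
          rw [hKg]
          have a1 := mul_le_mul_of_nonneg_left hzSle (mul_nonneg he0.le hR₁.le)
          have a2 := mul_le_mul_of_nonneg_left hySle (mul_nonneg he0.le hRz.le)
          linarith [a1, a2]
  have hcdiff : |c₁ - c₂| ≤ Kc * S := by
    have hid : c₁ - c₂ = g₁⁻¹ * (Real.exp ⟪z₁, y₁⟫ - Real.exp ⟪z₂, y₂⟫)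
        + Real.exp ⟪z₂, y₂⟫ * (g₁⁻¹ - g₂⁻¹) := by
      rw [hc₁, hc₂, div_eq_mul_inv, div_eq_mul_inv]; ring
    have hexp2 : Real.exp ⟪z₂, y₂⟫ ≤ e :=
      Real.exp_le_exp.2 ((le_abs_self _).trans (inner_le_bound hz₂ hy₂))
    rw [hid]
    calc |g₁⁻¹ * (Real.exp ⟪z₁, y₁⟫ - Real.exp ⟪z₂, y₂⟫)
          + Real.exp ⟪z₂, y₂⟫ * (g₁⁻¹ - g₂⁻¹)|
        ≤ |g₁⁻¹| * |Real.exp ⟪z₁, y₁⟫ - Real.exp ⟪z₂, y₂⟫|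
          + |Real.exp ⟪z₂, y₂⟫| * |g₁⁻¹ - g₂⁻¹| := by
          refine (abs_add_le _ _).trans ?_
          rw [abs_mul, abs_mul]
      _ ≤ e * (Kg * S) + e * (e * e * (Kg * S)) := by
          refine add_le_add ?_ ?_
          · refine mul_le_mul ?_ hEdiff (abs_nonneg _) he0.le
            rw [abs_of_nonneg (inv_nonneg.2 hg₁pos.le)]; exact hg₁inv
          · refine mul_le_mul ?_ hinvdiff (abs_nonneg _) he0.le
            rw [abs_of_nonneg (Real.exp_pos _).le]; exact hexp2
      _ = Kc * S := by rw [hKc]; ring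
  have hc₂n : |c₂| ≤ e * e := by
    rw [hc₂, abs_div, abs_of_nonneg (Real.exp_pos _).le, abs_of_pos hg₂pos, div_eq_mul_inv]
    exact mul_le_mul (Real.exp_le_exp.2 ((le_abs_self _).trans (inner_le_bound hz₂ hy₂)))
      hg2inv (inv_nonneg.2 hg₂pos.le) he0.le
  have hB₁n : ‖A₁ + ContinuousLinearMap.id ℝ (EuclideanSpace ℝ (Fin d))‖ ≤ Kb := by
    calc ‖A₁ + ContinuousLinearMap.id ℝ (EuclideanSpace ℝ (Fin d))‖
        ≤ ‖A₁‖ + ‖ContinuousLinearMap.id ℝ (EuclideanSpace ℝ (Fin d))‖ := norm_add_le _ _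
      _ ≤ ‖z₁‖ * ‖w₁‖ + 1 := by
          refine add_le_add ?_ ContinuousLinearMap.norm_id_le
          rw [hA₁, ContinuousLinearMap.norm_smulRight_apply, innerSL_apply_norm]
      _ ≤ Rz * (R₁ + e * (e * R₁)) + 1 := by
          refine add_le_add ?_ le_rfl
          exact mul_le_mul hz₁ hw₁n (norm_nonneg _) hRz.le
      _ = Kb := by rw [hKb]
  -- final assembly
  have hGid : lionsDerivGamma z₁ μ₁ y₁ - lionsDerivGamma z₂ μ₂ y₂
      = (c₁ - c₂) • (A₁ + ContinuousLinearMap.id ℝ (EuclideanSpace ℝ (Fin d)))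
        + c₂ • (A₁ - A₂) := by
    rw [lionsDerivGamma, lionsDerivGamma, ← hg₁, ← hg₂, ← hw₁, ← hw₂, ← hA₁, ← hA₂,
      ← hc₁, ← hc₂]
    module
  rw [hGid]
  calc ‖(c₁ - c₂) • (A₁ + ContinuousLinearMap.id ℝ (EuclideanSpace ℝ (Fin d)))
        + c₂ • (A₁ - A₂)‖
      ≤ ‖(c₁ - c₂) • (A₁ + ContinuousLinearMap.id ℝ (EuclideanSpace ℝ (Fin d)))‖
        + ‖c₂ • (A₁ - A₂)‖ := norm_add_le _ _
    _ ≤ |c₁ - c₂| * ‖A₁ + ContinuousLinearMap.id ℝ (EuclideanSpace ℝ (Fin d))‖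
        + |c₂| * ‖A₁ - A₂‖ := by
        refine add_le_add ?_ ?_
        · rw [← Real.norm_eq_abs]
          exact norm_smul_le (c₁ - c₂)
            (A₁ + ContinuousLinearMap.id ℝ (EuclideanSpace ℝ (Fin d)))
        · rw [← Real.norm_eq_abs]
          exact norm_smul_le c₂ (A₁ - A₂)
    _ ≤ (Kc * S) * Kb + (e * e) * (Ka * S) := by
        refine add_le_add ?_ ?_
        · exact mul_le_mul hcdiff hB₁n (norm_nonneg _) (mul_nonneg hKc0 hS0)
        · exact mul_le_mul hc₂n hAdiff (norm_nonneg _) (by positivity)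
    _ = (Kc * Kb + (e * e) * Ka) * S := by ring
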